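/- For every natural number n ≥ 1, the function r ↦ R_n(r) is differentiable on ℝ and its derivative satisfies (d/dr) R_n(r) = r · R_{n-1}(r) for every real r. -/

import Mathlib

open MeasureTheory intervalIntegral

/-- Hermite's integral `R_n(r) = ∫_0^r ((r² - x²)ⁿ / (2ⁿ n!)) cos x dx`. -/
noncomputable def R (n : ℕ) (r : ℝ) : ℝ :=
  ∫ x in (0:ℝ)..r, ((r ^ 2 - x ^ 2) ^ n / (2 ^ n * n.factorial)) * Real.cos x

noncomputable def J (m : ℕ) (r : ℝ) : ℝ := ∫ x in (0:ℝ)..r, x ^ m * Real.cos x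

noncomputable def c (n k : ℕ) : ℝ :=
  (n.choose k : ℝ) * (-1) ^ (n - k) / (2 ^ n * n.factorial)

lemma J_cont (m : ℕ) : Continuous fun x : ℝ => x ^ m * Real.cos x := by continuity

lemma J_hasDerivAt (m : ℕ) (r : ℝ) : HasDerivAt (J m) (r ^ m * Real.cos r) r :=
  intervalIntegral.integral_hasDerivAt_right ((J_cont m).intervalIntegrable _ _)
    ((J_cont m).stronglyMeasurable.stronglyMeasurableAtFilter) (J_cont m).continuousAt

lemma R_eq (n : ℕ) (r : ℝ) :
    R n r = ∑ k ∈ Finset.range (n + 1), c n k * (r ^ (2 * k) * J (2 * (n - k)) r) := by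
  unfold R
  have hpt : ∀ x : ℝ, ((r ^ 2 - x ^ 2) ^ n / (2 ^ n * n.factorial)) * Real.cos x
      = ∑ k ∈ Finset.range (n + 1),
          c n k * (r ^ (2 * k) * (x ^ (2 * (n - k)) * Real.cos x)) := by
    intro x
    rw [sub_eq_add_neg, add_pow, Finset.sum_div, Finset.sum_mul]
    refine Finset.sum_congr rfl fun k hk => ?_
    rw [neg_pow]
    unfold c
    rw [← pow_mul, ← pow_mul]
    ring
  rw [intervalIntegral.integral_congr (g := fun x => ∑ k ∈ Finset.range (n + 1),
      c n k * (r ^ (2 * k) * (x ^ (2 * (n - k)) * Real.cos x))) (fun x _ => hpt x)]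
  rw [intervalIntegral.integral_finset_sum]
  · refine Finset.sum_congr rfl fun k _ => ?_
    rw [intervalIntegral.integral_const_mul, intervalIntegral.integral_const_mul]
    rfl
  · intro k _
    exact (Continuous.intervalIntegrable (by continuity) _ _)

lemma c_succ (m j : ℕ) : c (m + 1) (j + 1) * (2 * ((j : ℝ) + 1)) = c m j := by
  have hc : ((m + 1).choose (j + 1) : ℝ) * (j + 1) = (m + 1) * m.choose j := by
    exact_mod_cast (Nat.add_one_mul_choose_eq m j).symm
  unfold c
  rw [Nat.succ_sub_succ, Nat.factorial_succ]
  have h1 : (2:ℝ) ^ (m + 1) ≠ 0 := by positivity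
  have h2 : ((m + 1 : ℕ) : ℝ) ≠ 0 := by positivity
  have h3 : ((m.factorial : ℝ)) ≠ 0 := by positivity
  push_cast
  field_simp
  linear_combination ((2 : ℝ) ^ m * 2) * hc

lemma choose_alt_sum (m : ℕ) :
    ∑ k ∈ Finset.range (m + 2), ((m + 1).choose k : ℝ) * (-1) ^ (m + 1 - k) = 0 := by
  have h := add_pow (1 : ℝ) (-1) (m + 1)
  simp only [one_pow, one_mul, add_neg_cancel, zero_pow, Nat.succ_ne_zero,
    ne_eq, not_false_iff] at h
  rw [show m + 1 + 1 = m + 2 from rfl] at h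
  rw [Finset.sum_congr rfl fun k _ => mul_comm (((m + 1).choose k : ℝ)) ((-1) ^ (m + 1 - k))]
  exact h.symm

lemma R_hasDerivAt (m : ℕ) (r : ℝ) : HasDerivAt (R (m + 1)) (r * R m r) r := by
  have hfun : R (m + 1) = fun r => ∑ k ∈ Finset.range (m + 2),
      c (m + 1) k * (r ^ (2 * k) * J (2 * (m + 1 - k)) r) := funext fun r => R_eq (m + 1) r
  have hd : HasDerivAt (fun r : ℝ => ∑ k ∈ Finset.range (m + 2),
      c (m + 1) k * (r ^ (2 * k) * J (2 * (m + 1 - k)) r))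
      (∑ k ∈ Finset.range (m + 2), c (m + 1) k *
        (((2 * k : ℕ) : ℝ) * r ^ (2 * k - 1) * J (2 * (m + 1 - k)) r
          + r ^ (2 * k) * (r ^ (2 * (m + 1 - k)) * Real.cos r))) r := by
    refine HasDerivAt.fun_sum fun k _ => ?_
    exact ((hasDerivAt_pow (2 * k) r).mul (J_hasDerivAt (2 * (m + 1 - k)) r)).const_mul _
  have hval : (∑ k ∈ Finset.range (m + 2), c (m + 1) k *
        (((2 * k : ℕ) : ℝ) * r ^ (2 * k - 1) * J (2 * (m + 1 - k)) r
          + r ^ (2 * k) * (r ^ (2 * (m + 1 - k)) * Real.cos r))) = r * R m r := by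
    have hsplit : ∀ k, c (m + 1) k *
        (((2 * k : ℕ) : ℝ) * r ^ (2 * k - 1) * J (2 * (m + 1 - k)) r
          + r ^ (2 * k) * (r ^ (2 * (m + 1 - k)) * Real.cos r))
        = c (m + 1) k * (((2 * k : ℕ) : ℝ) * r ^ (2 * k - 1) * J (2 * (m + 1 - k)) r)
          + c (m + 1) k * (r ^ (2 * k) * (r ^ (2 * (m + 1 - k)) * Real.cos r)) :=
      fun k => mul_add _ _ _
    rw [Finset.sum_congr rfl fun k _ => hsplit k, Finset.sum_add_distrib]
    have hB : (∑ k ∈ Finset.range (m + 2),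
        c (m + 1) k * (r ^ (2 * k) * (r ^ (2 * (m + 1 - k)) * Real.cos r))) = 0 := by
      have heach : ∀ k ∈ Finset.range (m + 2),
          c (m + 1) k * (r ^ (2 * k) * (r ^ (2 * (m + 1 - k)) * Real.cos r))
          = (((m + 1).choose k : ℝ) * (-1) ^ (m + 1 - k)) *
              (r ^ (2 * (m + 1)) * Real.cos r / (2 ^ (m + 1) * (m + 1).factorial)) := by
        intro k hk
        have hk' : k ≤ m + 1 := Nat.lt_succ_iff.mp (Finset.mem_range.mp hk)
        have hpow : r ^ (2 * k) * r ^ (2 * (m + 1 - k)) = r ^ (2 * (m + 1)) := by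
          rw [← pow_add]
          congr 1
          omega
        unfold c
        rw [← mul_assoc (r ^ (2 * k)), hpow]
        ring
      rw [Finset.sum_congr rfl heach, ← Finset.sum_mul, choose_alt_sum, zero_mul]
    rw [hB, add_zero]
    have hA : (∑ k ∈ Finset.range (m + 2),
        c (m + 1) k * (((2 * k : ℕ) : ℝ) * r ^ (2 * k - 1) * J (2 * (m + 1 - k)) r))
        = ∑ j ∈ Finset.range (m + 1),
            c (m + 1) (j + 1) * (((2 * (j + 1) : ℕ) : ℝ) * r ^ (2 * (j + 1) - 1)
              * J (2 * (m + 1 - (j + 1))) r) := by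
      rw [Finset.sum_range_succ']
      simp
    rw [hA, R_eq m r, Finset.mul_sum]
    refine Finset.sum_congr rfl fun j _ => ?_
    have hsub : m + 1 - (j + 1) = m - j := Nat.succ_sub_succ m j
    have hexp : 2 * (j + 1) - 1 = 2 * j + 1 := by omega
    rw [hsub, hexp]
    have := c_succ m j
    push_cast
    linear_combination (r ^ (2 * j) * r * J (2 * (m - j)) r) * this
  rw [hfun]
  exact hval ▸ hd

theorem R_deriv (n : ℕ) (hn : 1 ≤ n) :
    Differentiable ℝ (R n) ∧ ∀ r : ℝ, deriv (R n) r = r * R (n - 1) r := by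
  obtain ⟨m, rfl⟩ : ∃ m, n = m + 1 := ⟨n - 1, (Nat.succ_pred_eq_of_pos hn).symm⟩
  refine ⟨fun r => (R_hasDerivAt m r).differentiableAt, fun r => ?_⟩
  simpa using (R_hasDerivAt m r).deriv
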